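/- If q_m denotes the m-th prime number and c : ℕ → ℕ is any positive sequence, then the sequence defined by a(n) = Σ_{q_m | n} q_m^{c_m} (sum over those m with q_m dividing n) satisfies a(q_m) = q_m^{c_m}, and hence limsup_{n→∞} a(n)/c(n) need not be finite; in particular for c_m chosen so that q_m^{c_m} ≥ m · c_{q_m}, one has limsup_{n→∞} a(n)/c(n) = ∞. -/

import Mathlib

open Filter

/-- With `q m` the `m`-th prime and `c` a positive sequence, the sequence
`a n = ∑_{q_m ∣ n} q_m ^ c_m` satisfies `a (q_m) = q_m ^ c_m`; and if `c` is
chosen so that `q_m ^ c_m ≥ m * c (q_m)`, then `limsup a(n)/c(n) = ∞`. -/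
theorem stmt_1 (q : ℕ → ℕ) (hq : ∀ m, q m = Nat.nth Nat.Prime m)
    (c : ℕ → ℕ) (hc : ∀ n, 1 ≤ c n)
    (a : ℕ → ℕ)
    (ha : ∀ n, a n = ∑ m ∈ Finset.range n, if q m ∣ n then q m ^ c m else 0) :
    (∀ m, a (q m) = q m ^ c m) ∧
    ((∀ m, q m ^ c m ≥ m * c (q m)) →
      Filter.limsup (fun n => (((a n : ℝ) / (c n : ℝ) : ℝ) : EReal)) atTop = ⊤) := by
  have hprime : ∀ m, (q m).Prime := fun m => by
    rw [hq]; exact Nat.prime_nth_prime m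
  have hmono : StrictMono q := by
    have := Nat.nth_strictMono (p := Nat.Prime) Nat.infinite_setOf_prime
    intro i j hij; rw [hq, hq]; exact this hij
  have hlt : ∀ m, m < q m := by
    intro m
    induction m with
    | zero => exact (hprime 0).pos
    | succ k ih => exact Nat.lt_of_lt_of_le (Nat.succ_lt_succ ih) (hmono k.lt_succ_self)
  have key : ∀ m, a (q m) = q m ^ c m := by
    intro m
    rw [ha]
    rw [Finset.sum_eq_single_of_mem m (Finset.mem_range.2 (hlt m))]
    · exact if_pos dvd_rfl
    · intro b _ hb
      apply if_neg
      intro hdvd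
      exact hb (hmono.injective ((Nat.prime_dvd_prime_iff_eq (hprime b) (hprime m)).1 hdvd))
  refine ⟨key, fun hge => ?_⟩
  rw [EReal.eq_top_iff_forall_lt]
  intro y
  obtain ⟨M, hM⟩ := exists_nat_gt y
  have hle : ((M : ℝ) : EReal) ≤ Filter.limsup (fun n => (((a n : ℝ) / (c n : ℝ) : ℝ) : EReal)) atTop := by
    apply le_limsup_of_frequently_le'
    rw [Filter.frequently_atTop]
    intro N
    refine ⟨q (max N M), le_trans (le_max_left N M) (le_of_lt (hlt _)), ?_⟩
    · have hcpos : (0 : ℝ) < (c (q (max N M)) : ℝ) := by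
        exact_mod_cast hc (q (max N M))
      rw [EReal.coe_le_coe_iff, le_div_iff₀ hcpos, key]
      calc (M : ℝ) * (c (q (max N M)) : ℝ) ≤ (max N M : ℝ) * (c (q (max N M)) : ℝ) := by
            apply mul_le_mul_of_nonneg_right _ hcpos.le
            exact_mod_cast le_max_right N M
        _ ≤ ((q (max N M)) ^ (c (max N M)) : ℕ) := by exact_mod_cast hge (max N M)
  exact lt_of_lt_of_le (by exact_mod_cast hM) hle
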